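/- (Kempner) The sum of the reciprocals of those positive integers whose decimal representation contains no digit 9 converges. -/

import Mathlib

open Finset

/-- The indicator-style function on ℕ. -/
noncomputable def kempnerF (n : ℕ) : ℝ :=
  Set.indicator {m : ℕ | 1 ≤ m ∧ 9 ∉ Nat.digits 10 m} (fun n => (1 : ℝ) / n) n

lemma kempnerF_nonneg (n : ℕ) : 0 ≤ kempnerF n := by
  unfold kempnerF
  apply Set.indicator_nonneg
  intro x _
  positivity

lemma kempner_digits_len {k n : ℕ} (h1 : 10 ^ k ≤ n) (h2 : n < 10 ^ (k + 1)) :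
    (Nat.digits 10 n).length = k + 1 := by
  have hn : n ≠ 0 := by have := Nat.one_le_pow k 10 (by norm_num); omega
  rw [Nat.digits_len 10 n (by norm_num) hn, Nat.log_eq_of_pow_le_of_lt_pow h1 h2]

lemma kempner_card_block (k : ℕ) :
    ((Finset.Ico (10 ^ k) (10 ^ (k + 1))).filter (fun n => 9 ∉ Nat.digits 10 n)).card
      ≤ 9 ^ (k + 1) := by
  have h9 : ∀ n ∈ (Finset.Ico (10 ^ k) (10 ^ (k + 1))).filter
      (fun n => 9 ∉ Nat.digits 10 n), ∀ i : ℕ, (Nat.digits 10 n).getD i 0 < 9 := by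
    intro n hn i
    simp only [mem_filter, mem_Ico] at hn
    by_cases hi : i < (Nat.digits 10 n).length
    · rw [List.getD_eq_getElem _ _ hi]
      have hd : (Nat.digits 10 n)[i] ∈ Nat.digits 10 n := List.getElem_mem hi
      have := Nat.digits_lt_base (by norm_num) hd
      have hne : (Nat.digits 10 n)[i] ≠ 9 := fun h => hn.2 (h ▸ hd)
      omega
    · rw [List.getD_eq_default _ _ (le_of_not_gt hi)]
      norm_num
  calc ((Finset.Ico (10 ^ k) (10 ^ (k + 1))).filter (fun n => 9 ∉ Nat.digits 10 n)).card
      ≤ (Finset.univ : Finset (Fin (k + 1) → Fin 9)).card := by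
        apply Finset.card_le_card_of_injOn
          (fun n => fun i : Fin (k + 1) => ⟨(Nat.digits 10 n).getD i 0 % 9,
            Nat.mod_lt _ (by norm_num)⟩)
        · intro a _; exact Finset.mem_univ _
        · intro a ha b hb hab
          simp only [coe_filter, Set.mem_setOf_eq, mem_Ico] at ha hb
          have hla : (Nat.digits 10 a).length = k + 1 := kempner_digits_len ha.1.1 ha.1.2
          have hlb : (Nat.digits 10 b).length = k + 1 := kempner_digits_len hb.1.1 hb.1.2
          have hd : Nat.digits 10 a = Nat.digits 10 b := by
            apply List.ext_getElem (hla.trans hlb.symm)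
            intro i hi hi'
            have hik : i < k + 1 := hla ▸ hi
            have hc := congrFun hab ⟨i, hik⟩
            simp only [Fin.mk.injEq] at hc
            have hma := Nat.mod_eq_of_lt (h9 a (by simpa [mem_filter, mem_Ico] using ha) i)
            have hmb := Nat.mod_eq_of_lt (h9 b (by simpa [mem_filter, mem_Ico] using hb) i)
            rw [hma, hmb] at hc
            rw [← List.getD_eq_getElem _ 0 hi, ← List.getD_eq_getElem _ 0 hi']
            exact hc
          have := congrArg (Nat.ofDigits 10) hd
          rwa [Nat.ofDigits_digits, Nat.ofDigits_digits] at this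
    _ = 9 ^ (k + 1) := by simp [Fintype.card_fun]

lemma kempner_block_sum (k : ℕ) :
    ∑ i ∈ Finset.Ico (10 ^ k) (10 ^ (k + 1)), kempnerF i ≤ 9 * (9 / 10 : ℝ) ^ k := by
  classical
  have hsplit : ∑ i ∈ Finset.Ico (10 ^ k) (10 ^ (k + 1)), kempnerF i
      = ∑ i ∈ (Finset.Ico (10 ^ k) (10 ^ (k + 1))).filter
          (fun n => 1 ≤ n ∧ 9 ∉ Nat.digits 10 n), kempnerF i := by
    rw [Finset.sum_filter_of_ne]
    intro x _ hx
    by_contra h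
    exact hx (Set.indicator_of_notMem (show x ∉ {m : ℕ | 1 ≤ m ∧ 9 ∉ Nat.digits 10 m} from h) _)
  rw [hsplit]
  have hbound : ∀ i ∈ (Finset.Ico (10 ^ k) (10 ^ (k + 1))).filter
      (fun n => 1 ≤ n ∧ 9 ∉ Nat.digits 10 n), kempnerF i ≤ (10 : ℝ)⁻¹ ^ k := by
    intro i hi
    simp only [mem_filter, mem_Ico] at hi
    have h1 : kempnerF i = 1 / i :=
      Set.indicator_of_mem (show i ∈ {m : ℕ | 1 ≤ m ∧ 9 ∉ Nat.digits 10 m} from hi.2) _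
    rw [h1]
    rw [one_div, inv_pow]
    apply inv_anti₀ (by positivity)
    calc ((10 : ℝ) ^ k) = ((10 ^ k : ℕ) : ℝ) := by push_cast; ring
      _ ≤ i := Nat.cast_le.mpr hi.1.1
  calc ∑ i ∈ (Finset.Ico (10 ^ k) (10 ^ (k + 1))).filter
          (fun n => 1 ≤ n ∧ 9 ∉ Nat.digits 10 n), kempnerF i
      ≤ ((Finset.Ico (10 ^ k) (10 ^ (k + 1))).filter
          (fun n => 1 ≤ n ∧ 9 ∉ Nat.digits 10 n)).card • ((10 : ℝ)⁻¹ ^ k) :=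
        Finset.sum_le_card_nsmul _ _ _ hbound
    _ ≤ (9 ^ (k + 1) : ℕ) • ((10 : ℝ)⁻¹ ^ k) := by
        apply nsmul_le_nsmul_left (by positivity)
        calc ((Finset.Ico (10 ^ k) (10 ^ (k + 1))).filter
                (fun n => 1 ≤ n ∧ 9 ∉ Nat.digits 10 n)).card
            ≤ ((Finset.Ico (10 ^ k) (10 ^ (k + 1))).filter
                (fun n => 9 ∉ Nat.digits 10 n)).card := by
              apply Finset.card_le_card
              intro x hx
              simp only [mem_filter] at hx ⊢
              exact ⟨hx.1, hx.2.2⟩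
          _ ≤ 9 ^ (k + 1) := kempner_card_block k
    _ = 9 * (9 / 10 : ℝ) ^ k := by
        rw [nsmul_eq_mul]
        push_cast
        rw [pow_succ]
        field_simp
        ring_nf
        rw [← mul_pow]
        norm_num

lemma kempner_partial (d : ℕ) :
    ∑ i ∈ Finset.range (10 ^ d), kempnerF i ≤ 90 := by
  have key : ∀ d : ℕ, ∑ i ∈ Finset.range (10 ^ d), kempnerF i
      ≤ ∑ k ∈ Finset.range d, 9 * (9 / 10 : ℝ) ^ k := by
    intro d
    induction d with
    | zero =>
      simp only [pow_zero, Finset.range_one, Finset.sum_singleton, Finset.range_zero,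
        Finset.sum_empty]
      have : kempnerF 0 = 0 := by
        apply Set.indicator_of_notMem
        simp [Set.mem_setOf_eq]
      rw [this]
    | succ n ih =>
      rw [Finset.sum_range_succ]
      have hsplit : ∑ i ∈ Finset.range (10 ^ (n + 1)), kempnerF i
          = ∑ i ∈ Finset.range (10 ^ n), kempnerF i
            + ∑ i ∈ Finset.Ico (10 ^ n) (10 ^ (n + 1)), kempnerF i := by
        rw [Finset.range_eq_Ico,
          ← Finset.sum_Ico_consecutive _ (Nat.zero_le _)
            (Nat.pow_le_pow_right (n := 10) (by norm_num) (Nat.le_add_right n 1)), Finset.range_eq_Ico]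
      rw [hsplit]
      exact add_le_add ih (kempner_block_sum n)
  calc ∑ i ∈ Finset.range (10 ^ d), kempnerF i
      ≤ ∑ k ∈ Finset.range d, 9 * (9 / 10 : ℝ) ^ k := key d
    _ = 9 * ∑ k ∈ Finset.range d, (9 / 10 : ℝ) ^ k := by rw [Finset.mul_sum]
    _ ≤ 9 * (1 - 9 / 10)⁻¹ := by
        gcongr
        calc ∑ k ∈ Finset.range d, (9 / 10 : ℝ) ^ k
            ≤ ∑' k : ℕ, (9 / 10 : ℝ) ^ k := by
              apply Summable.sum_le_tsum
              · intro i _; positivity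
              · exact summable_geometric_of_lt_one (by norm_num) (by norm_num)
          _ = (1 - 9 / 10)⁻¹ := tsum_geometric_of_lt_one (by norm_num) (by norm_num)
    _ = 90 := by norm_num

theorem kempner_series_converges :
    Summable (fun n : {m : ℕ // 1 ≤ m ∧ 9 ∉ Nat.digits 10 m} => (1 : ℝ) / (n : ℕ)) := by
  have h : Summable (Set.indicator {m : ℕ | 1 ≤ m ∧ 9 ∉ Nat.digits 10 m}
      (fun n : ℕ => (1 : ℝ) / n)) := by
    apply summable_of_sum_range_le kempnerF_nonneg
    intro n
    calc ∑ i ∈ Finset.range n, kempnerF i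
        ≤ ∑ i ∈ Finset.range (10 ^ n), kempnerF i := by
          apply Finset.sum_le_sum_of_subset_of_nonneg
          · exact Finset.range_subset_range.mpr (Nat.lt_pow_self (by norm_num : 1 < 10)).le
          · intro i _ _; exact kempnerF_nonneg i
      _ ≤ 90 := kempner_partial n
  exact summable_subtype_iff_indicator.mpr h
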